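/- If Z₁ and Z₂ are continuous local martingales with Z₁(0) = Z₂(0), then the local time at level 0 of the continuous local martingale Z₂ − Z₁ vanishes identically on [0,T] if and only if Z₁ and Z₂ are indistinguishable. -/

import Mathlib

open MeasureTheory Filter Set
open Topology

noncomputable section

/-- A process is a martingale on the time interval `[0, T]`. -/
def MartingaleOn {Ω : Type*} [m : MeasurableSpace Ω] (T : ℝ) (ℱ : Filtration ℝ m)
    (M : ℝ → Ω → ℝ) (P : Measure Ω) : Prop :=
  Adapted ℱ M ∧ (∀ t, 0 ≤ t → t ≤ T → Integrable (M t) P) ∧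
    ∀ s t, 0 ≤ s → s ≤ t → t ≤ T → P[M t | ℱ s] =ᵐ[P] M s

/-- A process is a local martingale on `[0, T]`: there is a localizing sequence of stopping
times, nondecreasing and a.s. eventually equal to `T`, making the stopped processes
martingales on `[0, T]`. -/
def IsLocalMartingaleOn {Ω : Type*} [m : MeasurableSpace Ω] (T : ℝ) (ℱ : Filtration ℝ m)
    (M : ℝ → Ω → ℝ) (P : Measure Ω) : Prop :=
  ∃ τ : ℕ → Ω → ℝ, (∀ n, IsStoppingTime ℱ (fun ω => (τ n ω : WithTop ℝ))) ∧ (∀ n ω, τ n ω ≤ τ (n + 1) ω) ∧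
    (∀ᵐ ω ∂P, ∃ N, ∀ n ≥ N, τ n ω = T) ∧
    ∀ n, MartingaleOn T ℱ (MeasureTheory.stoppedProcess M (fun ω => (τ n ω : WithTop ℝ))) P

/-- Two processes are indistinguishable on `[0, T]`. -/
def IndistinguishableOn {Ω : Type*} [MeasurableSpace Ω] (T : ℝ) (M N : ℝ → Ω → ℝ)
    (P : Measure Ω) : Prop :=
  ∀ᵐ ω ∂P, ∀ t ∈ Set.Icc (0 : ℝ) T, M t ω = N t ω

/-- Right-continuity of a.e. path on `[0, T]`. -/
def RightContinuousPathsOn {Ω : Type*} [MeasurableSpace Ω] (T : ℝ) (M : ℝ → Ω → ℝ)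
    (P : Measure Ω) : Prop :=
  ∀ᵐ ω ∂P, ∀ t ∈ Set.Ico (0 : ℝ) T, ContinuousWithinAt (fun s => M s ω) (Set.Ici t) t

/-- Continuity of a.e. path on `[0, T]`. -/
def ContinuousPathsOn {Ω : Type*} [MeasurableSpace Ω] (T : ℝ) (M : ℝ → Ω → ℝ)
    (P : Measure Ω) : Prop :=
  ∀ᵐ ω ∂P, ContinuousOn (fun t => M t ω) (Set.Icc (0 : ℝ) T)

section AuxLemmas

variable {Ω : Type*} [m : MeasurableSpace Ω] {P : Measure Ω} [IsProbabilityMeasure P]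
  {ℱ : Filtration ℝ m}

lemma stoppedProcess_coe_apply (M : ℝ → Ω → ℝ) (τ : Ω → ℝ) (t : ℝ) (ω : Ω) :
    MeasureTheory.stoppedProcess M (fun ω => (τ ω : WithTop ℝ)) t ω = M (min t (τ ω)) ω := by
  show M (min (t : WithTop ℝ) (τ ω)).untopA ω = _
  rw [← WithTop.coe_min]; rfl

lemma measurableSet_nonneg_of_isStoppingTime {τ : Ω → ℝ} (hτ : IsStoppingTime ℱ (fun ω => (τ ω : WithTop ℝ))) :
    MeasurableSet[ℱ 0] {ω | 0 ≤ τ ω} := by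
  have h : {ω | τ ω < 0} = ⋃ k : ℕ, {ω | τ ω ≤ -(1 / (k + 1))} := by
    ext ω
    simp only [Set.mem_setOf_eq, Set.mem_iUnion]
    constructor
    · intro h
      obtain ⟨k, hk⟩ := exists_nat_one_div_lt (neg_pos.2 h)
      exact ⟨k, by linarith⟩
    · rintro ⟨k, hk⟩
      have : (0:ℝ) < 1 / (k + 1) := by positivity
      linarith
  have h2 : MeasurableSet[ℱ 0] {ω | τ ω < 0} := by
    rw [h]
    refine MeasurableSet.iUnion fun k => ?_
    have hle : -(1 / ((k:ℝ) + 1)) ≤ 0 := neg_nonpos.2 (by positivity)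
    exact ℱ.mono hle _ (by simpa only [WithTop.coe_le_coe] using hτ (-(1 / ((k:ℝ) + 1))))
  have h3 := h2.compl
  convert h3 using 1
  ext ω; simp [not_lt]

lemma ae_icc_zero_of_forall_ae {T : ℝ} (hT : 0 < T) {M : ℝ → Ω → ℝ}
    (hc : ∀ᵐ ω ∂P, ContinuousOn (fun s => M s ω) (Set.Icc 0 T))
    (h : ∀ t : ℝ, 0 ≤ t → t ≤ T → ∀ᵐ ω ∂P, M t ω = 0) :
    ∀ᵐ ω ∂P, ∀ t ∈ Set.Icc (0:ℝ) T, M t ω = 0 := by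
  have hq : ∀ᵐ ω ∂P, ∀ q : ℚ, (q:ℝ) ∈ Set.Icc (0:ℝ) T → M q ω = 0 := by
    rw [ae_all_iff]
    intro q
    by_cases hmem : (q:ℝ) ∈ Set.Icc (0:ℝ) T
    · filter_upwards [h q hmem.1 hmem.2] with ω hω _; exact hω
    · filter_upwards with ω hω; exact absurd hω hmem
  filter_upwards [hq, h T hT.le le_rfl, hc] with ω hωq hωT hωc
  intro t ht
  rcases eq_or_lt_of_le ht.2 with rfl | htT
  · exact hωT
  have hqseq : ∀ n : ℕ, ∃ q : ℚ, t < (q:ℝ) ∧ (q:ℝ) < t + (T - t) / (n + 1) := by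
    intro n
    have hlt : t < t + (T - t) / (n + 1) := by
      have : (0:ℝ) < (T - t) / (n + 1) := div_pos (sub_pos.2 htT) (by positivity)
      linarith
    exact exists_rat_btwn hlt
  choose q hq1 hq2 using hqseq
  have hqmem : ∀ n, ((q n : ℝ)) ∈ Set.Icc (0:ℝ) T := by
    intro n
    refine ⟨ht.1.trans (hq1 n).le, ?_⟩
    have hd : (T - t) / ((n:ℝ) + 1) ≤ T - t :=
      div_le_self (sub_pos.2 htT).le (by push_cast; linarith)
    have := hq2 n
    linarith
  have htendq : Tendsto (fun n : ℕ => (q n : ℝ)) atTop (𝓝 t) := by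
    have hup : Tendsto (fun n : ℕ => t + (T - t) / (n + 1)) atTop (𝓝 t) := by
      have h0 : Tendsto (fun n : ℕ => (T - t) * (1 / ((n:ℝ) + 1))) atTop (𝓝 ((T - t) * 0)) :=
        tendsto_one_div_add_atTop_nhds_zero_nat.const_mul _
      simp only [mul_zero] at h0
      have : (fun n : ℕ => t + (T - t) / (n + 1)) = fun n : ℕ => t + (T - t) * (1 / ((n:ℝ) + 1)) := by
        funext n; ring
      rw [this]
      simpa using tendsto_const_nhds.add h0
    exact tendsto_of_tendsto_of_tendsto_of_le_of_le tendsto_const_nhds hup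
      (fun n => (hq1 n).le) (fun n => (hq2 n).le)
  have hcw : ContinuousWithinAt (fun s => M s ω) (Set.Icc 0 T) t := hωc t ht
  have htendin : Tendsto (fun n : ℕ => (q n : ℝ)) atTop (𝓝[Set.Icc (0:ℝ) T] t) :=
    tendsto_nhdsWithin_iff.2 ⟨htendq, Eventually.of_forall hqmem⟩
  have hlim : Tendsto (fun n : ℕ => M (q n) ω) atTop (𝓝 (M t ω)) := hcw.tendsto.comp htendin
  have : Tendsto (fun _ : ℕ => (0:ℝ)) atTop (𝓝 (M t ω)) := by
    refine hlim.congr fun n => ?_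
    exact hωq (q n) (hqmem n)
  exact tendsto_nhds_unique this tendsto_const_nhds


lemma stoppedProcess_continuousOn {T : ℝ} {M : ℝ → Ω → ℝ} {τ : Ω → ℝ}
    (hc : ∀ᵐ ω ∂P, ContinuousOn (fun s => M s ω) (Set.Icc 0 T))
    (hT : 0 ≤ T) :
    ∀ᵐ ω ∂P, ContinuousOn (fun s => MeasureTheory.stoppedProcess M (fun ω => (τ ω : WithTop ℝ)) s ω) (Set.Icc 0 T) := by
  filter_upwards [hc] with ω hω
  by_cases hτ : 0 ≤ τ ω
  · have hcomp : ContinuousOn ((fun s => M s ω) ∘ fun s => min s (τ ω)) (Set.Icc 0 T) := by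
      refine ContinuousOn.comp hω (Continuous.continuousOn ?_) ?_
      · exact continuous_id.min continuous_const
      · intro s hs
        exact ⟨le_min hs.1 hτ, min_le_of_left_le hs.2⟩
    exact hcomp.congr fun s _ => stoppedProcess_coe_apply M τ s ω
  · push_neg at hτ
    refine (continuousOn_const (c := M (τ ω) ω)).congr fun s hs => ?_
    rw [stoppedProcess_coe_apply]
    rw [min_eq_right (hτ.le.trans hs.1)]

lemma ae_zero_at_of_isLocalMartingaleOn {T : ℝ} {M : ℝ → Ω → ℝ}
    (hM : IsLocalMartingaleOn T ℱ M P) (h0 : ∀ᵐ ω ∂P, M 0 ω = 0)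
    (hpos : ∀ᵐ ω ∂P, ∀ s ∈ Set.Icc (0:ℝ) T, 0 ≤ M s ω)
    {t : ℝ} (ht0 : 0 ≤ t) (htT : t ≤ T) : ∀ᵐ ω ∂P, M t ω = 0 := by
  obtain ⟨τ, hst, hmono, hev, hmart⟩ := hM
  have key : ∀ n : ℕ, ∀ᵐ ω ∂P,
      MeasureTheory.stoppedProcess M (fun ω => (τ n ω : WithTop ℝ)) t ω = MeasureTheory.stoppedProcess M (fun ω => (τ n ω : WithTop ℝ)) 0 ω := by
    intro n
    obtain ⟨ha, hi, hm⟩ := hmart n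
    have hce := hm 0 t le_rfl ht0 htT
    have hE : ∫ ω, MeasureTheory.stoppedProcess M (fun ω => (τ n ω : WithTop ℝ)) t ω ∂P
        = ∫ ω, MeasureTheory.stoppedProcess M (fun ω => (τ n ω : WithTop ℝ)) 0 ω ∂P :=
      (integral_condExp (ℱ.le 0)).symm.trans (integral_congr_ae hce)
    have hnn : 0 ≤ᵐ[P] fun ω => MeasureTheory.stoppedProcess M (fun ω => (τ n ω : WithTop ℝ)) t ω
        - MeasureTheory.stoppedProcess M (fun ω => (τ n ω : WithTop ℝ)) 0 ω := by
      filter_upwards [h0, hpos] with ω h0ω hpω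
      simp only [Pi.zero_apply, stoppedProcess_coe_apply]
      by_cases hτ0 : 0 ≤ τ n ω
      · rw [min_eq_left hτ0, h0ω]
        have hmem : min t (τ n ω) ∈ Set.Icc (0:ℝ) T :=
          ⟨le_min ht0 hτ0, (min_le_left _ _).trans htT⟩
        simpa using hpω _ hmem
      · push_neg at hτ0
        rw [min_eq_right hτ0.le, min_eq_right (hτ0.le.trans ht0)]
        simp
    have hint' : Integrable (fun ω => MeasureTheory.stoppedProcess M (fun ω => (τ n ω : WithTop ℝ)) t ω
        - MeasureTheory.stoppedProcess M (fun ω => (τ n ω : WithTop ℝ)) 0 ω) P :=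
      (hi t ht0 htT).sub (hi 0 le_rfl (ht0.trans htT))
    have hzero : ∫ ω, (MeasureTheory.stoppedProcess M (fun ω => (τ n ω : WithTop ℝ)) t ω
        - MeasureTheory.stoppedProcess M (fun ω => (τ n ω : WithTop ℝ)) 0 ω) ∂P = 0 := by
      rw [integral_sub (hi t ht0 htT) (hi 0 le_rfl (ht0.trans htT))]
      rw [hE]; ring
    have := (integral_eq_zero_iff_of_nonneg_ae hnn hint').1 hzero
    filter_upwards [this] with ω hω
    have : MeasureTheory.stoppedProcess M (fun ω => (τ n ω : WithTop ℝ)) t ω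
        - MeasureTheory.stoppedProcess M (fun ω => (τ n ω : WithTop ℝ)) 0 ω = 0 := hω
    linarith
  filter_upwards [ae_all_iff.2 key, hev, h0] with ω hkey hev' h0ω
  obtain ⟨N, hN⟩ := hev'
  have hτT : τ N ω = T := hN N le_rfl
  have h := hkey N
  simp only [stoppedProcess_coe_apply, hτT] at h
  rw [min_eq_left htT, min_eq_left (ht0.trans htT)] at h
  rw [h, h0ω]

lemma MartingaleOn.neg {T : ℝ} {X : ℝ → Ω → ℝ} (h : MartingaleOn T ℱ X P) :
    MartingaleOn T ℱ (fun s ω => -X s ω) P := by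
  obtain ⟨ha, hi, hm⟩ := h
  refine ⟨fun s => (ha s).neg, fun s h1 h2 => (hi s h1 h2).neg, fun s u h1 h2 h3 => ?_⟩
  have h4 := hm s u h1 h2 h3
  have h5 : P[(fun ω => -X u ω)|ℱ s] =ᵐ[P] -P[X u|ℱ s] := condExp_neg (X u) (ℱ s)
  filter_upwards [h4, h5] with ω hω h5ω
  show (P[(fun ω => -X u ω)|ℱ s]) ω = -X s ω
  rw [h5ω]
  simp [hω]

lemma IsLocalMartingaleOn.neg {T : ℝ} {M : ℝ → Ω → ℝ} (h : IsLocalMartingaleOn T ℱ M P) :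
    IsLocalMartingaleOn T ℱ (fun s ω => -M s ω) P := by
  obtain ⟨τ, h1, h2, h3, h4⟩ := h
  exact ⟨τ, h1, h2, h3, fun n => (h4 n).neg⟩


lemma optional_sampling_setIntegral
    {T : ℝ} {Y : ℝ → Ω → ℝ} (hY : MartingaleOn T ℱ Y P)
    (hc : ∀ᵐ ω ∂P, ContinuousOn (fun s => Y s ω) (Set.Icc 0 T))
    {ρ : Ω → ℝ} (hρ : IsStoppingTime ℱ (fun ω => (ρ ω : WithTop ℝ))) {t : ℝ} (ht0 : 0 < t) (htT : t ≤ T)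
    {B : Set Ω} (hB : MeasurableSet[ℱ 0] B) :
    Integrable (fun ω => Y (min (max (ρ ω) 0) t) ω) P ∧
      ∫ ω in B, Y (min (max (ρ ω) 0) t) ω ∂P = ∫ ω in B, Y t ω ∂P := by
  obtain ⟨hadp, hint, hmart⟩ := hY
  have hT0 : (0:ℝ) ≤ T := ht0.le.trans htT
  set ν : Ω → ℝ := fun ω => min (max (ρ ω) 0) t with hν_def
  have hν : IsStoppingTime ℱ (fun ω => (ν ω : WithTop ℝ)) := by
    have hfun : (fun ω => (ν ω : WithTop ℝ))
        = fun ω => min (max (ρ ω : WithTop ℝ) ((0:ℝ) : WithTop ℝ)) (t : WithTop ℝ) := by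
      funext ω; simp only [hν_def, WithTop.coe_min, WithTop.coe_max]
    rw [hfun]; exact (hρ.max_const 0).min_const t
  have hν0 : ∀ ω, 0 ≤ ν ω := fun ω => le_min (le_max_right _ _) ht0.le
  have hνt : ∀ ω, ν ω ≤ t := fun ω => min_le_right _ _
  -- auxiliary filtration and globally defined martingale
  set ℱ' : Filtration ℝ m :=
    ⟨fun s => ℱ (max s 0), fun s u hsu => ℱ.mono (max_le_max hsu le_rfl), fun s => ℱ.le _⟩
    with hℱ'_def
  set f' : ℝ → Ω → ℝ := fun s => Y (min (max s 0) T) with hf'_def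
  have hclip : ∀ s : ℝ, 0 ≤ min (max s 0) T ∧ min (max s 0) T ≤ T :=
    fun s => ⟨le_min (le_max_right _ _) hT0, min_le_right _ _⟩
  have hf't : f' t = Y t := by
    rw [hf'_def]; simp [max_eq_left ht0.le, min_eq_left htT]
  have hf'int : ∀ s, Integrable (f' s) P := fun s => hint _ (hclip s).1 (hclip s).2
  have hf'mart : Martingale f' ℱ' P := by
    constructor
    · intro s
      exact ((hadp _).mono (ℱ.mono (min_le_left _ _)) le_rfl).stronglyMeasurable
    · intro i j hij
      show P[f' j | ℱ (max i 0)] =ᵐ[P] f' i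
      by_cases hiT : max i 0 ≤ T
      · have hci : min (max i 0) T = max i 0 := min_eq_left hiT
        have h1 : (0:ℝ) ≤ min (max i 0) T := (hclip i).1
        have h2 : min (max i 0) T ≤ min (max j 0) T :=
          min_le_min (max_le_max hij le_rfl) le_rfl
        have hthis := hmart (min (max i 0) T) (min (max j 0) T) h1 h2 (hclip j).2
        rw [hci] at hthis
        show P[Y (min (max j 0) T) | ℱ (max i 0)] =ᵐ[P] Y (min (max i 0) T)
        rw [hci]
        exact hthis
      · push_neg at hiT
        have hci : min (max i 0) T = T := min_eq_right hiT.le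
        have hcj : min (max j 0) T = T :=
          min_eq_right (hiT.le.trans (max_le_max hij le_rfl))
        show P[Y (min (max j 0) T) | ℱ (max i 0)] =ᵐ[P] Y (min (max i 0) T)
        rw [hci, hcj]
        rw [condExp_of_stronglyMeasurable (ℱ.le _)
          ((hadp T).mono (ℱ.mono hiT.le) le_rfl).stronglyMeasurable (hint T hT0 le_rfl)]
  -- ν is also a stopping time for ℱ'
  -- dyadic upper approximations of ν
  set ν' : ℕ → Ω → ℝ := fun j ω => t * ⌈ν ω * 2 ^ j / t⌉ / 2 ^ j with hν'_def
  have h2pos : ∀ j : ℕ, (0:ℝ) < 2 ^ j := fun j => by positivity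
  have hle_t : ∀ j ω, ν' j ω ≤ t := by
    intro j ω
    have hy : ν ω * 2 ^ j / t ≤ 2 ^ j := by
      rw [div_le_iff₀ ht0]
      nlinarith [hνt ω, h2pos j]
    have hceil : (⌈ν ω * 2 ^ j / t⌉ : ℝ) ≤ 2 ^ j := by
      have : ⌈ν ω * 2 ^ j / t⌉ ≤ (2 ^ j : ℤ) := Int.ceil_le.2 (by push_cast; exact hy)
      exact_mod_cast this
    calc t * ⌈ν ω * 2 ^ j / t⌉ / 2 ^ j ≤ t * (2 ^ j) / 2 ^ j := by gcongr
      _ = t := by field_simp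
  have hge : ∀ j ω, ν ω ≤ ν' j ω := by
    intro j ω
    have h1 : ν ω * 2 ^ j / t ≤ (⌈ν ω * 2 ^ j / t⌉ : ℝ) := Int.le_ceil _
    calc ν ω = t * (ν ω * 2 ^ j / t) / 2 ^ j := by field_simp
      _ ≤ t * ⌈ν ω * 2 ^ j / t⌉ / 2 ^ j := by gcongr
  have h0' : ∀ j ω, 0 ≤ ν' j ω := fun j ω => (hν0 ω).trans (hge j ω)
  have hub : ∀ j ω, ν' j ω ≤ ν ω + t / 2 ^ j := by
    intro j ω
    have h1 : (⌈ν ω * 2 ^ j / t⌉ : ℝ) ≤ ν ω * 2 ^ j / t + 1 := (Int.ceil_lt_add_one _).le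
    calc ν' j ω ≤ t * (ν ω * 2 ^ j / t + 1) / 2 ^ j := by
          show t * ⌈ν ω * 2 ^ j / t⌉ / 2 ^ j ≤ _
          gcongr
      _ = ν ω + t / 2 ^ j := by field_simp
  have htend : ∀ ω, Tendsto (fun j => ν' j ω) atTop (𝓝 (ν ω)) := by
    intro ω
    have hup : Tendsto (fun j : ℕ => ν ω + t / 2 ^ j) atTop (𝓝 (ν ω)) := by
      have h0 : Tendsto (fun j : ℕ => t * (1 / 2 : ℝ) ^ j) atTop (𝓝 (t * 0)) :=
        (tendsto_pow_atTop_nhds_zero_of_lt_one (by norm_num) (by norm_num)).const_mul t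
      have heq : (fun j : ℕ => ν ω + t / 2 ^ j) = fun j : ℕ => ν ω + t * (1 / 2 : ℝ) ^ j := by
        funext j
        rw [div_pow, one_pow]
        ring
      rw [heq]
      simpa using tendsto_const_nhds.add h0
    exact tendsto_of_tendsto_of_tendsto_of_le_of_le tendsto_const_nhds hup
      (fun j => hge j ω) (fun j => hub j ω)
  have hstop' : ∀ j, IsStoppingTime ℱ' (fun ω => (ν' j ω : WithTop ℝ)) := by
    intro j s
    simp only [WithTop.coe_le_coe]
    have hset : {ω | ν' j ω ≤ s} = {ω | ν ω ≤ t * ⌊s * 2 ^ j / t⌋ / 2 ^ j} := by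
      ext ω
      have hA : ∀ r : ℝ, t * r / 2 ^ j ≤ s ↔ r ≤ s * 2 ^ j / t := by
        intro r
        constructor
        · intro h
          rw [le_div_iff₀ ht0]
          rw [div_le_iff₀ (h2pos j)] at h
          linarith
        · intro h
          rw [div_le_iff₀ (h2pos j)]
          rw [le_div_iff₀ ht0] at h
          linarith
      have hB : ∀ r : ℝ, ν ω ≤ t * r / 2 ^ j ↔ ν ω * 2 ^ j / t ≤ r := by
        intro r
        constructor
        · intro h
          rw [div_le_iff₀ ht0]
          rw [le_div_iff₀ (h2pos j)] at h
          linarith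
        · intro h
          rw [le_div_iff₀ (h2pos j)]
          rw [div_le_iff₀ ht0] at h
          linarith
      simp only [Set.mem_setOf_eq, hν'_def]
      constructor
      · intro h
        have h1 : (⌈ν ω * 2 ^ j / t⌉ : ℝ) ≤ s * 2 ^ j / t := (hA _).1 h
        have h2 : ν ω * 2 ^ j / t ≤ ((⌊s * 2 ^ j / t⌋ : ℤ) : ℝ) :=
          Int.ceil_le.1 (Int.le_floor.2 h1)
        exact (hB _).2 h2
      · intro h
        have h2 : ν ω * 2 ^ j / t ≤ ((⌊s * 2 ^ j / t⌋ : ℤ) : ℝ) := (hB _).1 h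
        have h1 : (⌈ν ω * 2 ^ j / t⌉ : ℝ) ≤ s * 2 ^ j / t :=
          Int.le_floor.1 (Int.ceil_le.2 h2)
        exact (hA _).2 h1
    have hc_le : t * ⌊s * 2 ^ j / t⌋ / 2 ^ j ≤ s := by
      have h1 : ((⌊s * 2 ^ j / t⌋ : ℤ) : ℝ) ≤ s * 2 ^ j / t := Int.floor_le _
      calc t * ⌊s * 2 ^ j / t⌋ / 2 ^ j ≤ t * (s * 2 ^ j / t) / 2 ^ j := by gcongr
        _ = s := by field_simp
    rw [hset]
    exact ℱ.mono (hc_le.trans (le_max_left s 0)) _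
      (by simpa only [WithTop.coe_le_coe] using hν (t * ⌊s * 2 ^ j / t⌋ / 2 ^ j))
  have hrange : ∀ j, (Set.range (fun ω => (ν' j ω : WithTop ℝ))).Countable := by
    intro j
    have hsub : Set.range (fun ω => (ν' j ω : WithTop ℝ))
        ⊆ Set.range (fun z : ℤ => ((t * z / 2 ^ j : ℝ) : WithTop ℝ)) := by
      rintro x ⟨ω, rfl⟩
      exact ⟨⌈ν ω * 2 ^ j / t⌉, rfl⟩
    exact (Set.countable_range _).mono hsub
  have hGm : ∀ j, (hstop' j).measurableSpace ≤ m :=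
    fun j => (hstop' j).measurableSpace_le_of_le (fun ω => WithTop.coe_le_coe.2 (hle_t j ω))
  have hYt_int : Integrable (Y t) P := hint t ht0.le htT
  have hcond : ∀ j, (fun ω => Y (ν' j ω) ω) =ᵐ[P] P[Y t | (hstop' j).measurableSpace] := by
    intro j
    have h1 := hf'mart.stoppedValue_ae_eq_condExp_of_le_const_of_countable_range
      (hstop' j) (fun ω => WithTop.coe_le_coe.2 (hle_t j ω)) (hrange j)
    have h2 : stoppedValue f' (fun ω => (ν' j ω : WithTop ℝ)) = fun ω => Y (ν' j ω) ω := by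
      funext ω
      show f' (ν' j ω) ω = Y (ν' j ω) ω
      rw [hf'_def]
      simp only []
      rw [max_eq_left (h0' j ω), min_eq_left ((hle_t j ω).trans htT)]
    rw [h2, hf't] at h1
    exact h1
  have hFj_int : ∀ j, Integrable (fun ω => Y (ν' j ω) ω) P :=
    fun j => integrable_condExp.congr (hcond j).symm
  have h_tend : ∀ᵐ ω ∂P, Tendsto (fun j => Y (ν' j ω) ω) atTop (𝓝 (Y (ν ω) ω)) := by
    filter_upwards [hc] with ω hω
    have hmem : ν ω ∈ Set.Icc (0:ℝ) T := ⟨hν0 ω, (hνt ω).trans htT⟩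
    have hcw : ContinuousWithinAt (fun s => Y s ω) (Set.Icc 0 T) (ν ω) := hω _ hmem
    have hin : Tendsto (fun j => ν' j ω) atTop (𝓝[Set.Icc (0:ℝ) T] (ν ω)) :=
      tendsto_nhdsWithin_iff.2 ⟨htend ω, Eventually.of_forall
        fun j => ⟨h0' j ω, (hle_t j ω).trans htT⟩⟩
    exact hcw.tendsto.comp hin
  have hui : UniformIntegrable (fun j => P[Y t | (hstop' j).measurableSpace]) 1 P :=
    hYt_int.uniformIntegrable_condExp hGm
  have hFaesm : ∀ j, AEStronglyMeasurable (fun ω => Y (ν' j ω) ω) P :=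
    fun j => (hFj_int j).aestronglyMeasurable
  have hFlim_aesm : AEStronglyMeasurable (fun ω => Y (ν ω) ω) P :=
    aestronglyMeasurable_of_tendsto_ae atTop hFaesm h_tend
  obtain ⟨C, hC⟩ := hui.2.2
  have hbd : ∀ j, eLpNorm (fun ω => Y (ν' j ω) ω) 1 P ≤ C :=
    fun j => le_of_eq_of_le (eLpNorm_congr_ae (hcond j)) (hC j)
  have hFle : eLpNorm (fun ω => Y (ν ω) ω) 1 P ≤ C := by
    refine le_trans (MeasureTheory.Lp.eLpNorm_lim_le_liminf_eLpNorm hFaesm _ h_tend) ?_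
    exact Filter.liminf_le_of_frequently_le' (Frequently.of_forall hbd)
  have hFmem : MemLp (fun ω => Y (ν ω) ω) 1 P := ⟨hFlim_aesm, lt_of_le_of_lt hFle ENNReal.coe_lt_top⟩
  have hFint : Integrable (fun ω => Y (ν ω) ω) P := memLp_one_iff_integrable.1 hFmem
  have hunif : UnifIntegrable (fun j ω => Y (ν' j ω) ω) 1 P :=
    hui.2.1.ae_eq fun j => (hcond j).symm
  have hL1 : Tendsto (fun j => eLpNorm ((fun ω => Y (ν' j ω) ω) - fun ω => Y (ν ω) ω) 1 P)
      atTop (𝓝 0) :=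
    tendsto_Lp_finite_of_tendsto_ae le_rfl ENNReal.one_ne_top hFaesm hFmem hunif h_tend
  have hBG : ∀ j, MeasurableSet[(hstop' j).measurableSpace] B := by
    intro j
    rw [(hstop' j).measurableSet]
    refine ⟨le_iSup (fun s => (ℱ' s : MeasurableSpace Ω)) 0 _ (ℱ.mono (le_max_right 0 0) _ hB), fun i => ?_⟩
    exact (ℱ.mono (le_max_right i 0) _ hB).inter ((hstop' j) i)
  have hint_j : ∀ j, ∫ ω in B, Y (ν' j ω) ω ∂P = ∫ ω in B, Y t ω ∂P := by
    intro j
    rw [integral_congr_ae (ae_restrict_of_ae (hcond j))]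
    exact setIntegral_condExp (hGm j) hYt_int (hBG j)
  have hconv := tendsto_setIntegral_of_L1' _ hFint.aestronglyMeasurable (Eventually.of_forall hFj_int) hL1 B
  simp_rw [hint_j] at hconv
  exact ⟨hFint, tendsto_nhds_unique hconv tendsto_const_nhds⟩


lemma min_shuffle (a b c : ℝ) : min (min a c) b = min (min b a) c := by
  rw [min_assoc, min_comm c b, ← min_assoc, min_comm a b]

lemma ae_diff_zero_at {T : ℝ} {Z₁ Z₂ : ℝ → Ω → ℝ}
    (hZ₁ : IsLocalMartingaleOn T ℱ Z₁ P) (hZ₂ : IsLocalMartingaleOn T ℱ Z₂ P)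
    (hcZ₁ : ContinuousPathsOn T Z₁ P) (hcZ₂ : ContinuousPathsOn T Z₂ P)
    (h0 : ∀ᵐ ω ∂P, Z₁ 0 ω = Z₂ 0 ω)
    (hpos : ∀ᵐ ω ∂P, ∀ s ∈ Set.Icc (0:ℝ) T, Z₂ s ω ≤ Z₁ s ω)
    {t : ℝ} (ht0 : 0 < t) (htT : t ≤ T) : ∀ᵐ ω ∂P, Z₁ t ω = Z₂ t ω := by
  obtain ⟨τ, hτst, hτmono, hτev, hτmart⟩ := hZ₁
  obtain ⟨σ, hσst, hσmono, hσev, hσmart⟩ := hZ₂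
  have hT0 : (0:ℝ) ≤ T := ht0.le.trans htT
  have key : ∀ n : ℕ, ∀ᵐ ω ∂P, (0 ≤ τ n ω ∧ 0 ≤ σ n ω) →
      Z₁ (min (min (τ n ω) (σ n ω)) t) ω = Z₂ (min (min (τ n ω) (σ n ω)) t) ω := by
    intro n
    set B : Set Ω := {ω | 0 ≤ τ n ω} ∩ {ω | 0 ≤ σ n ω} with hB_def
    have hBmeas : MeasurableSet[ℱ 0] B :=
      MeasurableSet.inter (measurableSet_nonneg_of_isStoppingTime (hτst n))
        (measurableSet_nonneg_of_isStoppingTime (hσst n))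
    have hBm : MeasurableSet B := ℱ.le 0 _ hBmeas
    have hc₁ := stoppedProcess_continuousOn (τ := τ n) hcZ₁ hT0
    have hc₂ := stoppedProcess_continuousOn (τ := σ n) hcZ₂ hT0
    obtain ⟨hI₁, hE₁⟩ := optional_sampling_setIntegral (hτmart n) hc₁ (hσst n) ht0 htT hBmeas
    obtain ⟨hI₂, hE₂⟩ := optional_sampling_setIntegral (hσmart n) hc₂ (hτst n) ht0 htT hBmeas
    obtain ⟨hadp₁, hint₁, hm₁⟩ := hτmart n
    obtain ⟨hadp₂, hint₂, hm₂⟩ := hσmart n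
    have hE₃ : ∫ ω in B, MeasureTheory.stoppedProcess Z₁ (fun ω => (τ n ω : WithTop ℝ)) t ω ∂P
        = ∫ ω in B, MeasureTheory.stoppedProcess Z₁ (fun ω => (τ n ω : WithTop ℝ)) 0 ω ∂P := by
      have hce := hm₁ 0 t le_rfl ht0.le htT
      rw [← setIntegral_condExp (ℱ.le 0) (hint₁ t ht0.le htT) hBmeas]
      exact setIntegral_congr_ae hBm (by filter_upwards [hce] with ω hω _; exact hω.symm) |>.symm
    have hE₄ : ∫ ω in B, MeasureTheory.stoppedProcess Z₂ (fun ω => (σ n ω : WithTop ℝ)) t ω ∂P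
        = ∫ ω in B, MeasureTheory.stoppedProcess Z₂ (fun ω => (σ n ω : WithTop ℝ)) 0 ω ∂P := by
      have hce := hm₂ 0 t le_rfl ht0.le htT
      rw [← setIntegral_condExp (ℱ.le 0) (hint₂ t ht0.le htT) hBmeas]
      exact setIntegral_congr_ae hBm (by filter_upwards [hce] with ω hω _; exact hω.symm) |>.symm
    have hE₅ : ∫ ω in B, MeasureTheory.stoppedProcess Z₁ (fun ω => (τ n ω : WithTop ℝ)) 0 ω ∂P
        = ∫ ω in B, MeasureTheory.stoppedProcess Z₂ (fun ω => (σ n ω : WithTop ℝ)) 0 ω ∂P := by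
      refine setIntegral_congr_ae hBm ?_
      filter_upwards [h0] with ω h0ω hωB
      rw [stoppedProcess_coe_apply, stoppedProcess_coe_apply]
      rw [min_eq_left hωB.1, min_eq_left hωB.2]
      exact h0ω
    have hrepr : ∀ ω, ω ∈ B →
        (MeasureTheory.stoppedProcess Z₁ (fun ω => (τ n ω : WithTop ℝ)) (min (max (σ n ω) 0) t) ω
          = Z₁ (min (min (τ n ω) (σ n ω)) t) ω)
        ∧ (MeasureTheory.stoppedProcess Z₂ (fun ω => (σ n ω : WithTop ℝ)) (min (max (τ n ω) 0) t) ω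
          = Z₂ (min (min (τ n ω) (σ n ω)) t) ω) := by
      intro ω hωB
      obtain ⟨h₁, h₂⟩ := hωB
      constructor
      · rw [stoppedProcess_coe_apply]
        rw [max_eq_left h₂, min_shuffle (σ n ω) (τ n ω) t]
      · rw [stoppedProcess_coe_apply]
        rw [max_eq_left h₁, min_shuffle (τ n ω) (σ n ω) t, min_comm (σ n ω) (τ n ω)]
    set g : Ω → ℝ := B.indicator (fun ω =>
      MeasureTheory.stoppedProcess Z₁ (fun ω => (τ n ω : WithTop ℝ)) (min (max (σ n ω) 0) t) ω
        - MeasureTheory.stoppedProcess Z₂ (fun ω => (σ n ω : WithTop ℝ)) (min (max (τ n ω) 0) t) ω) with hg_def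
    have hg_int : Integrable g P := (hI₁.sub hI₂).indicator hBm
    have hg_nonneg : 0 ≤ᵐ[P] g := by
      filter_upwards [hpos] with ω hp
      simp only [Pi.zero_apply, hg_def]
      by_cases hω : ω ∈ B
      · rw [Set.indicator_of_mem hω]
        obtain ⟨e₁, e₂⟩ := hrepr ω hω
        rw [e₁, e₂]
        have hmem : min (min (τ n ω) (σ n ω)) t ∈ Set.Icc (0:ℝ) T :=
          ⟨le_min (le_min hω.1 hω.2) ht0.le, (min_le_right _ _).trans htT⟩
        have := hp _ hmem
        linarith
      · rw [Set.indicator_of_notMem hω]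
    have hg_zero : ∫ ω, g ω ∂P = 0 := by
      rw [hg_def, integral_indicator hBm, integral_sub hI₁.integrableOn hI₂.integrableOn,
        hE₁, hE₂, hE₃, hE₄, hE₅]
      ring
    have hgae := (integral_eq_zero_iff_of_nonneg_ae hg_nonneg hg_int).1 hg_zero
    filter_upwards [hgae] with ω hg0 hωB'
    have hωB : ω ∈ B := ⟨hωB'.1, hωB'.2⟩
    have hg0' : g ω = 0 := hg0
    rw [hg_def, Set.indicator_of_mem hωB] at hg0'
    obtain ⟨e₁, e₂⟩ := hrepr ω hωB
    rw [e₁, e₂] at hg0'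
    linarith
  filter_upwards [ae_all_iff.2 key, hτev, hσev] with ω hkey hτe hσe
  obtain ⟨N₁, hN₁⟩ := hτe
  obtain ⟨N₂, hN₂⟩ := hσe
  have hτT : τ (max N₁ N₂) ω = T := hN₁ _ (le_max_left _ _)
  have hσT : σ (max N₁ N₂) ω = T := hN₂ _ (le_max_right _ _)
  have := hkey (max N₁ N₂) ⟨by rw [hτT]; exact hT0, by rw [hσT]; exact hT0⟩
  rw [hτT, hσT, min_self, min_eq_right htT] at this
  exact this

end AuxLemmas

/-- For continuous local martingales `Z₁, Z₂` with the same initial value, the local time at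
level `0` of `Z₂ - Z₁` (characterized through the Tanaka–Meyer formula
`(Z₂(t) - Z₁(t))⁺ = (Z₂(0) - Z₁(0))⁺ + ∫₀ᵗ 1_{Z₂ > Z₁} d(Z₂ - Z₁) + ½ L⁰(t)`,
where the stochastic integral `A` is a local martingale vanishing at `0` and `L⁰` is
nondecreasing, starts at `0` and is continuous) vanishes identically on `[0, T]` if and only
if `Z₁` and `Z₂` are indistinguishable. -/
theorem localTime_zero_iff_indistinguishable
    {Ω : Type*} [m : MeasurableSpace Ω] (P : Measure Ω) [IsProbabilityMeasure P]
    (ℱ : Filtration ℝ m) (T : ℝ) (hT : 0 < T)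
    (Z₁ Z₂ A L : ℝ → Ω → ℝ)
    (hZ₁ : IsLocalMartingaleOn T ℱ Z₁ P) (hZ₂ : IsLocalMartingaleOn T ℱ Z₂ P)
    (hcZ₁ : ContinuousPathsOn T Z₁ P) (hcZ₂ : ContinuousPathsOn T Z₂ P)
    (h0 : ∀ᵐ ω ∂P, Z₁ 0 ω = Z₂ 0 ω)
    -- `A` is the stochastic integral `∫₀· 1_{Z₂ > Z₁} d(Z₂ - Z₁)`, a continuous local
    -- martingale vanishing at time `0`:
    (hA : IsLocalMartingaleOn T ℱ A P) (hcA : ContinuousPathsOn T A P)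
    (hA0 : ∀ᵐ ω ∂P, A 0 ω = 0)
    -- `L` is the local time of `Z₂ - Z₁` at level `0`: continuous, nondecreasing, from `0`:
    (hcL : ContinuousPathsOn T L P) (hL0 : ∀ᵐ ω ∂P, L 0 ω = 0)
    (hLmono : ∀ᵐ ω ∂P, MonotoneOn (fun t => L t ω) (Set.Icc (0 : ℝ) T))
    -- Tanaka–Meyer formula:
    (hTanaka : ∀ᵐ ω ∂P, ∀ t ∈ Set.Icc (0 : ℝ) T,
      max (Z₂ t ω - Z₁ t ω) 0 = max (Z₂ 0 ω - Z₁ 0 ω) 0 + A t ω + L t ω / 2) :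
    (∀ᵐ ω ∂P, ∀ t ∈ Set.Icc (0 : ℝ) T, L t ω = 0) ↔
      IndistinguishableOn T Z₁ Z₂ P := by
  have hT0 : (0:ℝ) ≤ T := hT.le
  constructor
  · intro hL
    have hApos : ∀ᵐ ω ∂P, ∀ s ∈ Set.Icc (0:ℝ) T, 0 ≤ A s ω := by
      filter_upwards [hTanaka, h0, hL] with ω hTa h0ω hLω s hs
      have h := hTa s hs
      have hsub : Z₂ 0 ω - Z₁ 0 ω = 0 := by rw [h0ω]; ring
      rw [hsub, hLω s hs] at h
      simp only [max_self, zero_add, zero_div, add_zero] at h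
      have h2 : (0:ℝ) ≤ max (Z₂ s ω - Z₁ s ω) 0 := le_max_right _ _
      linarith [h2, h.le, h.ge]
    have hAzero : ∀ᵐ ω ∂P, ∀ s ∈ Set.Icc (0:ℝ) T, A s ω = 0 :=
      ae_icc_zero_of_forall_ae hT hcA
        (fun t' h1 h2 => ae_zero_at_of_isLocalMartingaleOn hA hA0 hApos h1 h2)
    have hZle : ∀ᵐ ω ∂P, ∀ s ∈ Set.Icc (0:ℝ) T, Z₂ s ω ≤ Z₁ s ω := by
      filter_upwards [hTanaka, h0, hL, hAzero] with ω hTa h0ω hLω hAω s hs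
      have h := hTa s hs
      have hsub : Z₂ 0 ω - Z₁ 0 ω = 0 := by rw [h0ω]; ring
      rw [hsub, hLω s hs, hAω s hs] at h
      simp only [max_self, zero_add, zero_div, add_zero] at h
      have h2 : Z₂ s ω - Z₁ s ω ≤ max (Z₂ s ω - Z₁ s ω) 0 := le_max_left _ _
      rw [h] at h2
      linarith
    have hcD : ∀ᵐ ω ∂P, ContinuousOn (fun s => Z₁ s ω - Z₂ s ω) (Set.Icc 0 T) := by
      filter_upwards [hcZ₁, hcZ₂] with ω h1 h2
      exact h1.sub h2
    have hfinal : ∀ᵐ ω ∂P, ∀ s ∈ Set.Icc (0:ℝ) T, Z₁ s ω - Z₂ s ω = 0 := by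
      refine ae_icc_zero_of_forall_ae (M := fun s ω => Z₁ s ω - Z₂ s ω) hT hcD ?_
      intro t' h1 h2
      rcases eq_or_lt_of_le h1 with rfl | h1'
      · filter_upwards [h0] with ω hω
        rw [hω]; ring
      · filter_upwards [ae_diff_zero_at hZ₁ hZ₂ hcZ₁ hcZ₂ h0 hZle h1' h2] with ω hω
        rw [hω]; ring
    filter_upwards [hfinal] with ω hω t ht
    have := hω t ht
    linarith
  · intro hInd
    have hA0' : ∀ᵐ ω ∂P, (fun s (ω : Ω) => -A s ω) 0 ω = 0 := by
      filter_upwards [hA0] with ω hω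
      simp [hω]
    have hnegApos : ∀ᵐ ω ∂P, ∀ s ∈ Set.Icc (0:ℝ) T, 0 ≤ (fun s (ω : Ω) => -A s ω) s ω := by
      filter_upwards [hTanaka, hInd, hLmono, hL0] with ω hTa hI hM hL0ω s hs
      have h := hTa s hs
      have h1 : Z₂ s ω - Z₁ s ω = 0 := by rw [hI s hs]; ring
      have h2 : Z₂ 0 ω - Z₁ 0 ω = 0 := by
        rw [hI 0 ⟨le_rfl, hT0⟩]; ring
      rw [h1, h2] at h
      simp only [max_self] at h
      have hLs : 0 ≤ L s ω := by
        have h4 := hM ⟨le_rfl, hT0⟩ hs hs.1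
        change L 0 ω ≤ L s ω at h4
        rw [hL0ω] at h4
        exact h4
      show 0 ≤ -A s ω
      linarith
    have hcA' : ContinuousPathsOn T (fun s ω => -A s ω) P := by
      filter_upwards [hcA] with ω hω
      exact hω.neg
    have hAzero : ∀ᵐ ω ∂P, ∀ s ∈ Set.Icc (0:ℝ) T, -A s ω = 0 :=
      ae_icc_zero_of_forall_ae hT hcA'
        (fun t' h1 h2 => ae_zero_at_of_isLocalMartingaleOn hA.neg hA0' hnegApos h1 h2)
    filter_upwards [hTanaka, hInd, hAzero] with ω hTa hI hAω t ht
    have h := hTa t ht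
    have h1 : Z₂ t ω - Z₁ t ω = 0 := by rw [hI t ht]; ring
    have h2 : Z₂ 0 ω - Z₁ 0 ω = 0 := by rw [hI 0 ⟨le_rfl, hT0⟩]; ring
    have h3 : A t ω = 0 := by have := hAω t ht; linarith
    rw [h1, h2, h3] at h
    simp only [max_self, add_zero, zero_add] at h
    linarith

end
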